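/- Let A = [[a,b],[c,d]] ∈ M_2(𝕋) with tropical determinant |A| = max(a+d, b+c) ≠ −∞, and define A∇ = [[d − |A|, b − |A|],[c − |A|, a − |A|]] (where (−∞) − |A| = −∞). Then A·A∇·A = A and A∇·A·A∇ = A∇; that is, A∇ is a generalized inverse of A. -/

import Mathlib

/-- The tropical semiring `𝕋 = ℝ ∪ {−∞}` (addition = max, multiplication = +,
with `⊥ = −∞` absorbing for `+`). -/
abbrev Trop : Type := WithBot ℝ

/-- Tropical product of 2×2 matrices: `(A⊙B)_{ik} = max_j (a_{ij} + b_{jk})`. -/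
noncomputable def tmul (A B : Matrix (Fin 2) (Fin 2) Trop) : Matrix (Fin 2) (Fin 2) Trop :=
  Matrix.of fun i k => max (A i 0 + B 0 k) (A i 1 + B 1 k)

lemma absorb {Z T : Trop} (hZ : Z ≤ 0) : max (Z + T) T = T :=
  max_eq_right (by simpa using add_le_add_left hZ T)

lemma absorb' {Z T : Trop} (hZ : Z ≤ 0) : max T (Z + T) = T :=
  (max_comm _ _).trans (absorb hZ)

lemma collapse (x y e : Trop) : (x + (y + e)) ⊔ (y + (x + e)) = x + y + e := by
  rw [show y + (x + e) = x + (y + e) by abel, max_self, add_assoc]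

lemma tropGI (a b c d e : Trop)
    (h1 : a + d + e ≤ 0) (h2 : b + c + e ≤ 0)
    (hsum : (a + d + e) ⊔ (b + c + e) = 0) :
    tmul (tmul !![a, b; c, d]
        !![d + e, b + e; c + e, a + e]) !![a, b; c, d] = !![a, b; c, d] ∧
    tmul (tmul !![d + e, b + e; c + e, a + e] !![a, b; c, d])
        !![d + e, b + e; c + e, a + e] = !![d + e, b + e; c + e, a + e] := by
  have i1 : (a + (d + e)) ⊔ (b + (c + e)) = 0 := by
    rw [← add_assoc, ← add_assoc]; exact hsum
  have i2 : (c + (b + e)) ⊔ (d + (a + e)) = 0 := by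
    rw [show c + (b+e) = b + c + e by abel, show d + (a+e) = a + d + e by abel,
      max_comm]; exact hsum
  have j1 : ((d+e) + a) ⊔ ((b+e) + c) = 0 := by
    rw [show (d+e) + a = a + d + e by abel, show (b+e) + c = b + c + e by abel]
    exact hsum
  have j2 : ((d+e) + b) ⊔ ((b+e) + d) = b + d + e := by
    rw [show (d+e) + b = b + d + e by abel, show (b+e) + d = b + d + e by abel, max_self]
  have j3 : ((c+e) + a) ⊔ ((a+e) + c) = a + c + e := by
    rw [show (c+e) + a = a + c + e by abel, show (a+e) + c = a + c + e by abel, max_self]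
  have j4 : ((c+e) + b) ⊔ ((a+e) + d) = 0 := by
    rw [show (c+e) + b = b + c + e by abel, show (a+e) + d = a + d + e by abel,
      max_comm]; exact hsum
  constructor
  · ext i j
    fin_cases i <;> fin_cases j <;>
      simp only [tmul, Matrix.of_apply, Matrix.cons_val', Matrix.cons_val_zero,
        Matrix.cons_val_one, Matrix.head_cons, Matrix.empty_val',
        Matrix.cons_val_fin_one, Matrix.head_fin_const, Fin.isValue, Fin.mk_one,
        Fin.zero_eta]
    · rw [i1, collapse, zero_add, show a + b + e + c = (b+c+e) + a by abel]
      exact absorb' h2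
    · rw [i1, collapse, zero_add, show a + b + e + d = (a+d+e) + b by abel]
      exact absorb' h1
    · rw [i2, collapse, zero_add, show c + d + e + a = (a+d+e) + c by abel]
      exact absorb h1
    · rw [i2, collapse, zero_add, show c + d + e + b = (b+c+e) + d by abel]
      exact absorb h2
  · ext i j
    fin_cases i <;> fin_cases j <;>
      simp only [tmul, Matrix.of_apply, Matrix.cons_val', Matrix.cons_val_zero,
        Matrix.cons_val_one, Matrix.head_cons, Matrix.empty_val',
        Matrix.cons_val_fin_one, Matrix.head_fin_const, Fin.isValue, Fin.mk_one,
        Fin.zero_eta]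
    · rw [j1, j2, zero_add, show b + d + e + (c+e) = (b+c+e) + (d+e) by abel]
      exact absorb' h2
    · rw [j1, j2, zero_add, show b + d + e + (a+e) = (a+d+e) + (b+e) by abel]
      exact absorb' h1
    · rw [j3, j4, zero_add, show a + c + e + (d+e) = (a+d+e) + (c+e) by abel]
      exact absorb h1
    · rw [j3, j4, zero_add, show a + c + e + (b+e) = (b+c+e) + (a+e) by abel]
      exact absorb h2

/-- If `A = [[a,b],[c,d]] ∈ M₂(𝕋)` has tropical determinant `|A| = max (a+d) (b+c) = r ≠ −∞`,
then `A∇ = [[d−r, b−r],[c−r, a−r]]` (tropical division, i.e. subtraction of `r`, with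
`−∞ − r = −∞`) is a generalized inverse of `A`: `A⊙A∇⊙A = A` and `A∇⊙A⊙A∇ = A∇`. -/
theorem stmt5 (a b c d : Trop) (r : ℝ)
    (hdet : max (a + d) (b + c) = (r : Trop)) :
    tmul (tmul !![a, b; c, d]
        !![d + ((-r : ℝ) : Trop), b + ((-r : ℝ) : Trop);
           c + ((-r : ℝ) : Trop), a + ((-r : ℝ) : Trop)]) !![a, b; c, d] = !![a, b; c, d] ∧
    tmul (tmul !![d + ((-r : ℝ) : Trop), b + ((-r : ℝ) : Trop);
           c + ((-r : ℝ) : Trop), a + ((-r : ℝ) : Trop)] !![a, b; c, d])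
        !![d + ((-r : ℝ) : Trop), b + ((-r : ℝ) : Trop);
           c + ((-r : ℝ) : Trop), a + ((-r : ℝ) : Trop)] =
      !![d + ((-r : ℝ) : Trop), b + ((-r : ℝ) : Trop);
         c + ((-r : ℝ) : Trop), a + ((-r : ℝ) : Trop)] := by
  set e : Trop := ((-r : ℝ) : Trop) with he
  have hre : (r : Trop) + e = 0 := by
    rw [he, ← WithBot.coe_add]; norm_num
  have h1 : a + d + e ≤ 0 := by
    rw [← hre]; exact add_le_add_left (hdet ▸ le_max_left _ _) e
  have h2 : b + c + e ≤ 0 := by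
    rw [← hre]; exact add_le_add_left (hdet ▸ le_max_right _ _) e
  have hsum : (a + d + e) ⊔ (b + c + e) = 0 := by
    rw [max_add_add_right, hdet, hre]
  exact tropGI a b c d e h1 h2 hsum
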